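/- Let X be a measurable space, f : X → Measure X a measurable function all of whose values are probability measures, μ a probability measure on X, and define the iterates μ₀ = μ and μ_{n+1} = μ_n.bind f. Let Q ⊆ X be a measurable set such that (f x) Q ≥ 1 − δ' for every x ∈ Q, and suppose μ Q ≥ 1 − δ. Then μ_n Q ≥ 1 − δ − n·δ' for every n ∈ ℕ. (This union bound over iterations is the semantic core of the MFOLD-U rule and of the adversary rule ADV-U: an invariant preserved by each oracle call with error probability δ' is preserved after k calls with error probability k·δ'.) -/

import Mathlib

open MeasureTheory ENNReal

/-- A union bound over iterations: the semantic core of the `MFOLD-U` rule and of the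
adversary rule `ADV-U`.  An invariant `Q` that holds initially with error probability `δ`
and is preserved by each step `f` with error probability `δ'` still holds after `n`
iterations with error probability `δ + n·δ'`. -/
theorem iter_union_bound {X : Type*} [MeasurableSpace X]
    (f : X → Measure X) (hf : Measurable f) (hfp : ∀ x, IsProbabilityMeasure (f x))
    (μ : Measure X) [IsProbabilityMeasure μ]
    (μs : ℕ → Measure X) (h0 : μs 0 = μ) (hsucc : ∀ n, μs (n + 1) = (μs n).bind f)
    (Q : Set X) (hQm : MeasurableSet Q) (δ δ' : ℝ≥0∞)
    (hpres : ∀ x ∈ Q, 1 - δ' ≤ f x Q)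
    (hinit : 1 - δ ≤ μ Q) :
    ∀ n : ℕ, 1 - δ - n * δ' ≤ μs n Q := by
  -- each iterate is a probability measure
  have hprob : ∀ n, IsProbabilityMeasure (μs n) := by
    intro n
    induction n with
    | zero => rw [h0]; infer_instance
    | succ n ih =>
      rw [hsucc]
      constructor
      rw [Measure.bind_apply MeasurableSet.univ hf.aemeasurable]
      have : ∀ x, f x Set.univ = 1 := fun x => (hfp x).measure_univ
      simp [this]
  -- complement bound for each step
  have hstep : ∀ x ∈ Q, f x Qᶜ ≤ δ' := by
    intro x hx
    have h1 : f x Qᶜ = 1 - f x Q := by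
      have := (hfp x)
      rw [prob_compl_eq_one_sub hQm]
    rw [h1]
    calc 1 - f x Q ≤ 1 - (1 - δ') := tsub_le_tsub_left (hpres x hx) 1
    _ ≤ δ' := tsub_tsub_le
  -- complement bound on iterates
  have hcompl : ∀ n, μs n Qᶜ ≤ δ + n * δ' := by
    intro n
    induction n with
    | zero =>
      have := hprob 0
      rw [h0] at this ⊢
      simp only [Nat.cast_zero, zero_mul, add_zero]
      calc μ Qᶜ = 1 - μ Q := prob_compl_eq_one_sub hQm
      _ ≤ 1 - (1 - δ) := tsub_le_tsub_left hinit 1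
      _ ≤ δ := tsub_tsub_le
    | succ n ih =>
      have hprobn := hprob n
      have hbind : μs (n + 1) Qᶜ = ∫⁻ x, f x Qᶜ ∂(μs n) := by
        rw [hsucc, Measure.bind_apply hQm.compl hf.aemeasurable]
      rw [hbind, ← lintegral_add_compl (μ := μs n) (fun x => f x Qᶜ) hQm]
      have h1 : ∫⁻ x in Q, f x Qᶜ ∂(μs n) ≤ δ' := by
        calc ∫⁻ x in Q, f x Qᶜ ∂(μs n) ≤ ∫⁻ _ in Q, δ' ∂(μs n) :=
          setLIntegral_mono_ae (by fun_prop) (Filter.Eventually.of_forall hstep)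
        _ = δ' * μs n Q := by rw [setLIntegral_const]
        _ ≤ δ' * 1 := mul_le_mul_right prob_le_one δ'
        _ = δ' := mul_one δ'
      have h2 : ∫⁻ x in Qᶜ, f x Qᶜ ∂(μs n) ≤ δ + n * δ' := by
        calc ∫⁻ x in Qᶜ, f x Qᶜ ∂(μs n) ≤ ∫⁻ _ in Qᶜ, 1 ∂(μs n) :=
          setLIntegral_mono_ae (by fun_prop) (Filter.Eventually.of_forall
            fun x _ => prob_le_one)
        _ = μs n Qᶜ := by rw [setLIntegral_const, one_mul]
        _ ≤ δ + n * δ' := ih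
      calc ∫⁻ x in Q, f x Qᶜ ∂(μs n) + ∫⁻ x in Qᶜ, f x Qᶜ ∂(μs n)
          ≤ δ' + (δ + n * δ') := add_le_add h1 h2
      _ = δ + (n + 1 : ℕ) * δ' := by push_cast; ring
  intro n
  have := hprob n
  calc 1 - δ - n * δ' = 1 - (δ + n * δ') := by rw [tsub_tsub]
  _ ≤ 1 - μs n Qᶜ := tsub_le_tsub_left (hcompl n) 1
  _ = μs n Q := by rw [← prob_compl_eq_one_sub hQm.compl, compl_compl]
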